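/- (Sufficiency of the realtime-clock criterion) Suppose memory changes only at events. Let s be a correct snapshot and let t_max be a time such that for every region r, s(r).t ≤ t_max and no event e with reg e = r satisfies s(r).t < rt e ≤ t_max. Then s satisfies quasi-instantaneous consistency (witnessed by the time t_max). -/
import Mathlib

/-- (Sufficiency of the realtime-clock criterion) If memory changes only at
events, `s` is a correct snapshot, and `t_max` is a time such that every region's
acquisition time is at most `t_max` and no event on that region happens strictly
after the acquisition time and up to `t_max`, then `s` satisfies
quasi-instantaneous consistency (witnessed by `t_max`). -/
theorem realtimeClock_criterion_sufficient
    (R V E : Type*) (m : R → ℕ → V)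
    (reg : E → R) (rt : E → ℕ)
    (hchange : ∀ (r : R) (t : ℕ), m r (t + 1) ≠ m r t →
      ∃ e : E, reg e = r ∧ rt e = t + 1)
    (s : R → V × ℕ)
    (hcorrect : ∀ r, (s r).1 = m r (s r).2)
    (tmax : ℕ)
    (hle : ∀ r, (s r).2 ≤ tmax)
    (hnoev : ∀ r, ¬ ∃ e : E, reg e = r ∧ (s r).2 < rt e ∧ rt e ≤ tmax) :
    ∀ r, (s r).1 = m r tmax := by
  intro r
  rw [hcorrect r]
  have key : ∀ t, (s r).2 ≤ t → t ≤ tmax → m r t = m r (s r).2 := by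
    intro t
    induction t with
    | zero => intro h _; simp [Nat.le_zero.mp h]
    | succ n ih =>
      intro h1 h2
      rcases Nat.lt_or_ge (s r).2 (n + 1) with hlt | hge
      · have hstep : m r (n + 1) = m r n := by
          by_contra hne
          obtain ⟨e, he1, he2⟩ := hchange r n hne
          exact hnoev r ⟨e, he1, by omega, by omega⟩
        rw [hstep, ih (by omega) (by omega)]
      · have h : (s r).2 = n + 1 := by omega
        rw [h]
  rw [key tmax (hle r) le_rfl]
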